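/- arXiv:2312.13555 — 2 statements merged into one kernel-verified Lean document; each statement's English description precedes it below -/
import Mathlib

section
/- Let E be a real inner product space, let f : E → ℝ, and let w, v ∈ E. If f is three times differentiable at w (i.e., f admits a third-order Taylor expansion at w), then the central first difference satisfies f(w + ρ•v) − f(w − ρ•v) − 2ρ·⟪∇f(w), v⟫ = O(ρ³) as ρ → 0. -/
open scoped RealInnerProductSpace Topology
open Asymptotics Filter

lemma isBigO_succ_of_deriv_isBigO {g : ℝ → ℝ} {n : ℕ}
    (hg : ∀ᶠ ρ in 𝓝 (0:ℝ), DifferentiableAt ℝ g ρ) (h0 : g 0 = 0)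
    (hd : deriv g =O[𝓝 (0:ℝ)] fun ρ => ρ ^ n) :
    g =O[𝓝 (0:ℝ)] fun ρ => ρ ^ (n+1) := by
  rcases hd.exists_nonneg with ⟨C, hC, hCbound⟩
  rw [Asymptotics.isBigOWith_iff] at hCbound
  rcases Metric.eventually_nhds_iff.mp (hg.and hCbound) with ⟨δ, hδ, hball⟩
  rw [Asymptotics.isBigO_iff]
  refine ⟨C, Metric.eventually_nhds_iff.mpr ⟨δ, hδ, fun ρ hρ => ?_⟩⟩
  rw [Real.dist_eq, sub_zero] at hρ
  have habs : ∀ t ∈ Set.uIcc (0:ℝ) ρ, |t| ≤ |ρ| := by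
    intro t ht
    rw [Set.uIcc_eq_union] at ht
    rcases ht with ht | ht <;> rw [Set.mem_Icc] at ht <;>
      obtain ⟨h1, h2⟩ := ht <;> rw [abs_le] <;> constructor <;>
      nlinarith [le_abs_self ρ, neg_abs_le ρ]
  have key : ∀ t ∈ Set.uIcc (0:ℝ) ρ, dist t 0 < δ := fun t ht => by
    rw [Real.dist_eq, sub_zero]; exact lt_of_le_of_lt (habs t ht) hρ
  have hb : ∀ t ∈ Set.uIcc (0:ℝ) ρ, ‖deriv g t‖ ≤ C * |ρ| ^ n := by
    intro t ht
    refine le_trans (hball (key t ht)).2 ?_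
    calc C * ‖t ^ n‖ = C * |t| ^ n := by rw [Real.norm_eq_abs, abs_pow]
      _ ≤ C * |ρ| ^ n :=
          mul_le_mul_of_nonneg_left (pow_le_pow_left₀ (abs_nonneg t) (habs t ht) n) hC
  have hmvt := Convex.norm_image_sub_le_of_norm_deriv_le (f := g)
    (fun t ht => (hball (key t ht)).1) hb (convex_uIcc _ _)
    Set.left_mem_uIcc Set.right_mem_uIcc
  rw [h0, sub_zero, sub_zero] at hmvt
  calc ‖g ρ‖ ≤ C * |ρ| ^ n * ‖ρ‖ := hmvt
    _ = C * ‖ρ ^ (n+1)‖ := by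
        rw [Real.norm_eq_abs, Real.norm_eq_abs, abs_pow, pow_succ]; ring

/-- For a three times differentiable function, the central first difference approximates
`2ρ ⟪∇f(w), v⟫` with error `O(ρ³)` as `ρ → 0`. -/
theorem central_first_difference_isBigO_cube
    {E : Type*} [NormedAddCommGroup E] [InnerProductSpace ℝ E] [CompleteSpace E]
    (f : E → ℝ) (w v : E)
    (h₁ : ∀ᶠ x in 𝓝 w, DifferentiableAt ℝ f x)
    (h₂ : ∀ᶠ x in 𝓝 w, DifferentiableAt ℝ (fderiv ℝ f) x)
    (h₃ : DifferentiableAt ℝ (fderiv ℝ (fderiv ℝ f)) w) :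
    (fun ρ : ℝ => f (w + ρ • v) - f (w - ρ • v) - 2 * ρ * ⟪gradient f w, v⟫)
      =O[𝓝 (0 : ℝ)] (fun ρ : ℝ => ρ ^ 3) := by
  set c : ℝ := ⟪gradient f w, v⟫ with hcdef
  have hc : c = fderiv ℝ f w v := by
    rw [hcdef, gradient, InnerProductSpace.toDual_symm_apply]
  set A : E → (E →L[ℝ] ℝ) := fderiv ℝ f with hA
  set B : E → (E →L[ℝ] (E →L[ℝ] ℝ)) := fderiv ℝ (fderiv ℝ f) with hB
  set g : ℝ → ℝ := fun ρ => f (w + ρ • v) - f (w - ρ • v) - 2 * ρ * c with hgdef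
  set D : ℝ → ℝ := fun ρ => A (w + ρ • v) v + A (w - ρ • v) v - 2 * c with hDdef
  set H : ℝ → ℝ := fun ρ => (B (w + ρ • v) v) v - (B (w - ρ • v) v) v with hHdef
  -- the two affine lines
  have hlinep : ∀ ρ : ℝ, HasDerivAt (fun ρ : ℝ => w + ρ • v) v ρ := fun ρ => by
    simpa using ((hasDerivAt_id ρ).smul_const v).const_add w
  have hlinem : ∀ ρ : ℝ, HasDerivAt (fun ρ : ℝ => w - ρ • v) (-v) ρ := fun ρ => by
    simpa [sub_eq_add_neg, smul_neg] using
      ((hasDerivAt_id ρ).smul_const (-v)).const_add w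
  have htendp : Tendsto (fun ρ : ℝ => w + ρ • v) (𝓝 0) (𝓝 w) :=
    Continuous.tendsto' (by continuity) 0 w (by simp)
  have htendm : Tendsto (fun ρ : ℝ => w - ρ • v) (𝓝 0) (𝓝 w) :=
    Continuous.tendsto' (by continuity) 0 w (by simp)
  -- eventually, g has derivative D
  have hgD : ∀ᶠ ρ in 𝓝 (0:ℝ), HasDerivAt g (D ρ) ρ := by
    filter_upwards [htendp.eventually h₁, htendm.eventually h₁] with ρ hfp hfm
    have H1 : HasDerivAt (fun ρ : ℝ => f (w + ρ • v)) (A (w + ρ • v) v) ρ :=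
      hfp.hasFDerivAt.comp_hasDerivAt ρ (hlinep ρ)
    have H2 : HasDerivAt (fun ρ : ℝ => f (w - ρ • v)) (A (w - ρ • v) (-v)) ρ :=
      hfm.hasFDerivAt.comp_hasDerivAt ρ (hlinem ρ)
    have H3 : HasDerivAt (fun ρ : ℝ => 2 * ρ * c) (2 * c) ρ := by
      simpa [mul_assoc] using (((hasDerivAt_id ρ).const_mul (2:ℝ)).mul_const c)
    have := (H1.sub H2).sub H3
    have h' : HasDerivAt g (A (w + ρ • v) v - A (w - ρ • v) (-v) - 2 * c) ρ := this
    simpa [hDdef, map_neg, sub_neg_eq_add] using h'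
  -- eventually, D has derivative H
  have hDH : ∀ᶠ ρ in 𝓝 (0:ℝ), HasDerivAt D (H ρ) ρ := by
    filter_upwards [htendp.eventually h₂, htendm.eventually h₂] with ρ hAp hAm
    have H1 : HasDerivAt (fun ρ : ℝ => A (w + ρ • v)) (B (w + ρ • v) v) ρ :=
      hAp.hasFDerivAt.comp_hasDerivAt ρ (hlinep ρ)
    have H2 : HasDerivAt (fun ρ : ℝ => A (w - ρ • v)) (B (w - ρ • v) (-v)) ρ :=
      hAm.hasFDerivAt.comp_hasDerivAt ρ (hlinem ρ)
    have H1' : HasDerivAt (fun ρ : ℝ => A (w + ρ • v) v) ((B (w + ρ • v) v) v) ρ :=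
      (ContinuousLinearMap.apply ℝ ℝ v).hasFDerivAt.comp_hasDerivAt ρ H1
    have H2' : HasDerivAt (fun ρ : ℝ => A (w - ρ • v) v) ((B (w - ρ • v) (-v)) v) ρ :=
      (ContinuousLinearMap.apply ℝ ℝ v).hasFDerivAt.comp_hasDerivAt ρ H2
    have := (H1'.add H2').sub_const (2 * c)
    simpa [hDdef, hHdef, map_neg, sub_eq_add_neg] using this
  -- H is O(ρ)
  have hlinedp : DifferentiableAt ℝ (fun ρ : ℝ => w + ρ • v) 0 := (hlinep 0).differentiableAt
  have hlinedm : DifferentiableAt ℝ (fun ρ : ℝ => w - ρ • v) 0 := (hlinem 0).differentiableAt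
  have hHdiff : DifferentiableAt ℝ H 0 := by
    have h3p : DifferentiableAt ℝ (fun ρ : ℝ => B (w + ρ • v)) 0 :=
      DifferentiableAt.comp (g := B) 0 (by simpa using h₃) hlinedp
    have h3m : DifferentiableAt ℝ (fun ρ : ℝ => B (w - ρ • v)) 0 :=
      DifferentiableAt.comp (g := B) 0 (by simpa using h₃) hlinedm
    exact (((h3p.clm_apply (differentiableAt_const v)).clm_apply
        (differentiableAt_const v)).sub
      ((h3m.clm_apply (differentiableAt_const v)).clm_apply (differentiableAt_const v)))
  have hH0 : H 0 = 0 := by simp [hHdef]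
  have hHO : H =O[𝓝 (0:ℝ)] fun ρ => ρ ^ 1 := by
    have := hHdiff.isBigO_sub
    simpa [hH0] using this
  -- D is O(ρ²)
  have hD0 : D 0 = 0 := by simp [hDdef, hc]; ring
  have hDO : D =O[𝓝 (0:ℝ)] fun ρ => ρ ^ 2 :=
    isBigO_succ_of_deriv_isBigO
      (hDH.mono fun ρ h => h.differentiableAt)
      hD0
      (Filter.EventuallyEq.trans_isBigO (hDH.mono fun ρ h => h.deriv) hHO)
  -- g is O(ρ³)
  have hg0 : g 0 = 0 := by simp [hgdef]
  have hgO : g =O[𝓝 (0:ℝ)] fun ρ => ρ ^ 3 :=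
    isBigO_succ_of_deriv_isBigO
      (hgD.mono fun ρ h => h.differentiableAt)
      hg0
      (Filter.EventuallyEq.trans_isBigO (hgD.mono fun ρ h => h.deriv) hDO)
  exact hgO
end

section
/- Let E be a real inner product space, let f : E → ℝ be differentiable on the closed ball of radius r > 0 centered at w ∈ E, and suppose the gradient x ↦ ∇f(x) is Lipschitz with constant M ≥ 0 on that ball. Then for every ρ with 0 < ρ ≤ r, the true sharpness satisfies | sSup {f(w + ρ•v) : ‖v‖ ≤ 1} − f(w) − ρ·‖∇f(w)‖ | ≤ (M/2)·ρ². -/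
open scoped RealInnerProductSpace
open Set

lemma true_sharpness_key
    {E : Type*} [NormedAddCommGroup E] [InnerProductSpace ℝ E] [CompleteSpace E]
    (f : E → ℝ) (w : E) (r M : ℝ) (hM : 0 ≤ M)
    (hdiff : ∀ x ∈ Metric.closedBall w r, DifferentiableAt ℝ f x)
    (hlip : ∀ x ∈ Metric.closedBall w r, ∀ y ∈ Metric.closedBall w r,
      ‖gradient f x - gradient f y‖ ≤ M * ‖x - y‖)
    (ρ : ℝ) (hρ : 0 < ρ) (hρr : ρ ≤ r) (v : E) (hv : ‖v‖ ≤ 1) :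
    |f (w + ρ • v) - f w - ρ * ⟪gradient f w, v⟫| ≤ M / 2 * ρ ^ 2 := by
  set u : E := ρ • v with hu
  have hnu : ‖u‖ ≤ ρ := by
    rw [hu, norm_smul, Real.norm_eq_abs, abs_of_pos hρ]
    calc ρ * ‖v‖ ≤ ρ * 1 := by nlinarith [norm_nonneg v]
      _ = ρ := mul_one ρ
  have hmem : ∀ t ∈ Icc (0:ℝ) 1, w + t • u ∈ Metric.closedBall w r := by
    intro t ht
    rw [Metric.mem_closedBall, dist_eq_norm]
    rw [add_sub_cancel_left, norm_smul, Real.norm_eq_abs, abs_of_nonneg ht.1]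
    calc t * ‖u‖ ≤ 1 * ρ := by
          apply mul_le_mul ht.2 hnu (norm_nonneg u) zero_le_one
      _ = ρ := one_mul ρ
      _ ≤ r := hρr
  -- derivative of g t = f (w + t • u)
  have hg : ∀ t ∈ Icc (0:ℝ) 1,
      HasDerivAt (fun s : ℝ => f (w + s • u)) ⟪gradient f (w + t • u), u⟫ t := by
    intro t ht
    have hline : HasDerivAt (fun s : ℝ => w + s • u) u t := by
      simpa using ((hasDerivAt_id t).smul_const u).const_add w
    have hgrad : HasGradientAt f (gradient f (w + t • u)) (w + t • u) :=
      (hdiff _ (hmem t ht)).hasGradientAt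
    have := hgrad.hasFDerivAt.comp_hasDerivAt t hline
    simpa [Function.comp_def] using this
  -- F t = g t - g 0 - t * ⟪∇f w, u⟫
  set c : ℝ := ⟪gradient f w, u⟫ with hc
  set F : ℝ → ℝ := fun t => f (w + t • u) - f w - t * c with hF
  have hF' : ∀ t ∈ Icc (0:ℝ) 1,
      HasDerivAt F (⟪gradient f (w + t • u), u⟫ - c) t := by
    intro t ht
    have := ((hg t ht).sub_const (f w)).sub ((hasDerivAt_id t).mul_const c)
    simpa [hF, Pi.sub_def] using this
  have bound : ∀ t ∈ Ico (0:ℝ) 1, ‖⟪gradient f (w + t • u), u⟫ - c‖ ≤ (M * ρ ^ 2) * t := by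
    intro t ht
    have htI : t ∈ Icc (0:ℝ) 1 := ⟨ht.1, le_of_lt ht.2⟩
    have : ⟪gradient f (w + t • u), u⟫ - c = ⟪gradient f (w + t • u) - gradient f w, u⟫ := by
      rw [hc, inner_sub_left]
    rw [this]
    calc ‖⟪gradient f (w + t • u) - gradient f w, u⟫‖
        ≤ ‖gradient f (w + t • u) - gradient f w‖ * ‖u‖ := norm_inner_le_norm _ _
      _ ≤ (M * ‖(w + t • u) - w‖) * ‖u‖ := by
          apply mul_le_mul_of_nonneg_right _ (norm_nonneg u)
          exact hlip _ (hmem t htI) _ (Metric.mem_closedBall_self (le_of_lt (lt_of_lt_of_le hρ hρr)))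
      _ = (M * (t * ‖u‖)) * ‖u‖ := by
          congr 2
          rw [add_sub_cancel_left, norm_smul, Real.norm_eq_abs,
            abs_of_nonneg ht.1]
      _ ≤ (M * ρ ^ 2) * t := by nlinarith [mul_nonneg hM ht.1, mul_le_mul hnu hnu (norm_nonneg u) (le_of_lt hρ)]
  have hBderiv : ∀ t : ℝ, HasDerivAt (fun t => M * ρ ^ 2 / 2 * t ^ 2) ((M * ρ ^ 2) * t) t := by
    intro t
    have := (hasDerivAt_pow 2 t).const_mul (M * ρ ^ 2 / 2)
    refine this.congr_deriv ?_
    norm_num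
    ring
  have hcont : ContinuousOn F (Icc 0 1) := fun t ht => ((hF' t ht).continuousAt).continuousWithinAt
  have key := image_norm_le_of_norm_deriv_right_le_deriv_boundary hcont
    (fun t ht => (hF' t ⟨ht.1, le_of_lt ht.2⟩).hasDerivWithinAt)
    (by simp [hF]) hBderiv bound (Set.right_mem_Icc.2 zero_le_one)
  have : F 1 = f (w + ρ • v) - f w - ρ * ⟪gradient f w, v⟫ := by
    simp only [hF, one_smul, one_mul, hc, hu, real_inner_smul_right]
  rw [Real.norm_eq_abs, this] at key
  calc |f (w + ρ • v) - f w - ρ * ⟪gradient f w, v⟫| ≤ M * ρ ^ 2 / 2 * 1 ^ 2 := key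
    _ = M / 2 * ρ ^ 2 := by ring
/-- If `f` is differentiable on the closed ball of radius `r` around `w` and its gradient is
`M`-Lipschitz there, then for `0 < ρ ≤ r` the true sharpness
`sup_{‖v‖ ≤ 1} f(w + ρ v) - f(w)` equals `ρ ‖∇f(w)‖` up to an error of at most `(M/2) ρ²`. -/
theorem true_sharpness_approx
    {E : Type*} [NormedAddCommGroup E] [InnerProductSpace ℝ E] [CompleteSpace E]
    (f : E → ℝ) (w : E) (r M : ℝ) (hr : 0 < r) (hM : 0 ≤ M)
    (hdiff : ∀ x ∈ Metric.closedBall w r, DifferentiableAt ℝ f x)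
    (hlip : ∀ x ∈ Metric.closedBall w r, ∀ y ∈ Metric.closedBall w r,
      ‖gradient f x - gradient f y‖ ≤ M * ‖x - y‖)
    (ρ : ℝ) (hρ : 0 < ρ) (hρr : ρ ≤ r) :
    |sSup {y : ℝ | ∃ v : E, ‖v‖ ≤ 1 ∧ f (w + ρ • v) = y} - f w - ρ * ‖gradient f w‖|
      ≤ (M / 2) * ρ ^ 2 := by
  set g : E := gradient f w with hg
  set S : Set ℝ := {y : ℝ | ∃ v : E, ‖v‖ ≤ 1 ∧ f (w + ρ • v) = y} with hS
  have key : ∀ v : E, ‖v‖ ≤ 1 →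
      |f (w + ρ • v) - f w - ρ * ⟪g, v⟫| ≤ M / 2 * ρ ^ 2 := fun v hv =>
    true_sharpness_key f w r M hM hdiff hlip ρ hρ hρr v hv
  -- upper bound for all elements of S
  have hub : ∀ y ∈ S, y ≤ f w + ρ * ‖g‖ + M / 2 * ρ ^ 2 := by
    rintro y ⟨v, hv, rfl⟩
    have h1 := (abs_le.1 (key v hv)).2
    have h2 : ⟪g, v⟫ ≤ ‖g‖ := by
      calc ⟪g, v⟫ ≤ ‖g‖ * ‖v‖ := real_inner_le_norm g v
        _ ≤ ‖g‖ * 1 := mul_le_mul_of_nonneg_left hv (norm_nonneg g)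
        _ = ‖g‖ := mul_one _
    nlinarith
  have hne : S.Nonempty := ⟨f w, 0, by simp⟩
  have hbdd : BddAbove S := ⟨f w + ρ * ‖g‖ + M / 2 * ρ ^ 2, hub⟩
  -- lower bound: pick the maximizing direction
  set v₀ : E := ‖g‖⁻¹ • g with hv₀
  have hv₀n : ‖v₀‖ ≤ 1 := by
    rcases eq_or_ne g 0 with h | h
    · simp [hv₀, h]
    · rw [hv₀, norm_smul, Real.norm_eq_abs, abs_of_nonneg (inv_nonneg.2 (norm_nonneg g)),
        inv_mul_cancel₀ (norm_ne_zero_iff.2 h)]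
  have hinner : ⟪g, v₀⟫ = ‖g‖ := by
    rcases eq_or_ne g 0 with h | h
    · simp [hv₀, h]
    · rw [hv₀, real_inner_smul_right, real_inner_self_eq_norm_sq]
      rw [sq]
      field_simp
  have hlow : f w + ρ * ‖g‖ - M / 2 * ρ ^ 2 ≤ sSup S := by
    have h1 := (abs_le.1 (key v₀ hv₀n)).1
    rw [hinner] at h1
    have hmem : f (w + ρ • v₀) ∈ S := ⟨v₀, hv₀n, rfl⟩
    have := le_csSup hbdd hmem
    linarith
  have hupp : sSup S ≤ f w + ρ * ‖g‖ + M / 2 * ρ ^ 2 := csSup_le hne hub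
  rw [abs_le]
  constructor <;> [linarith; linarith]
end
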